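/- Let P be a finite poset, k a field, and Q a full subposet of P with inclusion ι : Q ↪ P. Let M be a persistence module over Q with End(M) ≅ k (a brick), and let X be a persistence module over P. Then X ≅ Θ(M) if and only if the following three conditions hold: (i) Res(X) ≅ M; (ii) for every proper subobject Y of X, Res(Y) ≇ M; (iii) for every proper quotient Z of X, Res(Z) ≇ M. -/

import Mathlib

open CategoryTheory CategoryTheory.Limits

attribute [local instance] CategoryTheory.Limits.HasFiniteBiproducts.of_hasFiniteProducts

section Posets

variable {P : Type} [PartialOrder P]

/-- Zigzag connectivity of two elements of a subset `S` of a poset: they are linked by a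
zigzag of comparable pairs inside `S`. -/
def ZigzagConnIn (S : Set P) (a b : S) : Prop :=
  Relation.ReflTransGen (fun u v : S => (u : P) ≤ v ∨ (v : P) ≤ u) a b

/-- A subset of a poset is convex if `x ≤ z ≤ y` with `x, y` in the subset implies `z` is. -/
def IsConvex (S : Set P) : Prop :=
  ∀ ⦃x y z : P⦄, x ∈ S → y ∈ S → x ≤ z → z ≤ y → z ∈ S

/-- An interval of a poset: a nonempty, convex, zigzag-connected subset. -/
def IsIntervalSet (S : Set P) : Prop :=
  S.Nonempty ∧ IsConvex S ∧ ∀ a b : S, ZigzagConnIn S a b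

end Posets

section IntervalModules

variable (k : Type) [Field k] {P : Type} [PartialOrder P]

open Classical in
/-- The linear map between the fibers of the interval module. -/
noncomputable def intervalModuleAux (S : Set P) (p q : P) :
    ↥(if p ∈ S then (⊤ : Submodule k k) else ⊥) →ₗ[k]
      ↥(if q ∈ S then (⊤ : Submodule k k) else ⊥) where
  toFun x := ⟨(if p ∈ S ∧ q ∈ S then (1 : k) else 0) * x.1, by
    by_cases hq : q ∈ S
    · rw [if_pos hq]; exact Submodule.mem_top
    · rw [if_neg hq, if_neg (fun h => hq h.2), zero_mul]; exact Submodule.zero_mem _⟩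
  map_add' x y := by ext; simp [mul_add]
  map_smul' c x := by ext; simp

open Classical in
/-- The interval module `k_S` associated to a convex subset `S` of a poset `P`:
it is `k` at points of `S`, `0` elsewhere, with identity structure maps inside `S`. -/
noncomputable def intervalModule (S : Set P) (hS : IsConvex S) : P ⥤ ModuleCat.{0} k where
  obj p := ModuleCat.of k ↥(if p ∈ S then (⊤ : Submodule k k) else ⊥)
  map {p q} _ := ModuleCat.ofHom (intervalModuleAux k S p q)
  map_id p := by
    apply ModuleCat.hom_ext
    apply LinearMap.ext
    rintro ⟨x, hx⟩
    apply Subtype.ext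
    show (if p ∈ S ∧ p ∈ S then (1 : k) else 0) * x = x
    by_cases hp : p ∈ S
    · simp [hp]
    · rw [if_neg hp] at hx
      simp [hp, (Submodule.mem_bot k).mp hx]
  map_comp {p q r} f g := by
    apply ModuleCat.hom_ext
    apply LinearMap.ext
    rintro ⟨x, hx⟩
    apply Subtype.ext
    show (if p ∈ S ∧ r ∈ S then (1 : k) else 0) * x
      = (if q ∈ S ∧ r ∈ S then (1 : k) else 0) * ((if p ∈ S ∧ q ∈ S then (1 : k) else 0) * x)
    by_cases hp : p ∈ S
    · by_cases hr : r ∈ S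
      · have hq : q ∈ S := hS hp hr (leOfHom f) (leOfHom g)
        simp [hp, hq, hr]
      · simp [hr]
    · rw [if_neg hp] at hx
      simp [(Submodule.mem_bot k).mp hx]

/-- A persistence module is an interval module if it is isomorphic to `k_S` for some
interval `S`. -/
def IsIntervalModule (M : P ⥤ ModuleCat.{0} k) : Prop :=
  ∃ (S : Set P) (hS : IsIntervalSet S), Nonempty (M ≅ intervalModule k S hS.2.1)

/-- A persistence module is interval-decomposable if it is isomorphic to a finite direct sum
of interval modules. -/
def IsIntervalDecomposable (M : P ⥤ ModuleCat.{0} k) : Prop :=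
  ∃ (n : ℕ) (J : Fin n → (P ⥤ ModuleCat.{0} k)),
    (∀ i, IsIntervalModule k (J i)) ∧ Nonempty (M ≅ ⨁ J)

/-- The support of a persistence module. -/
def moduleSupport (M : P ⥤ ModuleCat.{0} k) : Set P := {p : P | ¬ IsZero (M.obj p)}

/-- A persistence module valued in finite-dimensional vector spaces. -/
def PointwiseFinite (M : P ⥤ ModuleCat.{0} k) : Prop :=
  ∀ p : P, FiniteDimensional k (M.obj p)

end IntervalModules

section Approximations

variable {C : Type*} [Category C]

/-- `f : X ⟶ M` is a right `𝒳`-approximation of `M` if `X ∈ 𝒳` and every morphism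
from an object of `𝒳` to `M` factors through `f`. -/
def IsRightApproximation (𝒳 : C → Prop) {X M : C} (f : X ⟶ M) : Prop :=
  𝒳 X ∧ ∀ ⦃Y : C⦄ (g : Y ⟶ M), 𝒳 Y → ∃ h : Y ⟶ X, h ≫ f = g

/-- `f : X ⟶ M` is right minimal if every endomorphism `g` of `X` with `f ∘ g = f`
is an isomorphism. -/
def IsRightMinimal {X M : C} (f : X ⟶ M) : Prop :=
  ∀ g : X ⟶ X, g ≫ f = f → IsIso g

end Approximations

/-- An interval cover: a right minimal approximation by interval-decomposable modules. -/
def IsIntervalCover (k : Type) [Field k] {P : Type} [PartialOrder P]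
    {X M : P ⥤ ModuleCat.{0} k} (f : X ⟶ M) : Prop :=
  IsRightApproximation (IsIntervalDecomposable k) f ∧ IsRightMinimal f

section Resolutions

variable {C : Type*} [Category C] [Limits.HasZeroMorphisms C]

/-- `M` admits a resolution `0 ⟶ J_n ⟶ ⋯ ⟶ J_1 ⟶ J_0 ⟶ M ⟶ 0` of length `n` by objects
of `𝒳`: an exact sequence in which every `J_i` lies in `𝒳`.  (The data is encoded by an
`ℕ`-indexed complex which vanishes in degrees `> n` and is exact everywhere.) -/
def HasResolutionOfLength (𝒳 : C → Prop) (n : ℕ) (M : C) : Prop :=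
  ∃ (J : ℕ → C) (d : ∀ i, J (i + 1) ⟶ J i) (f : J 0 ⟶ M) (w0 : d 0 ≫ f = 0)
    (w : ∀ i, d (i + 1) ≫ d i = 0),
    (∀ i, i ≤ n → 𝒳 (J i)) ∧ (∀ i, n < i → IsZero (J i)) ∧
    Epi f ∧ (ShortComplex.mk (d 0) f w0).Exact ∧
    ∀ i, (ShortComplex.mk (d (i + 1)) (d i) (w i)).Exact

end Resolutions

section KanTheta

variable (k : Type) [Field k] {P : Type} [PartialOrder P] (Q : Set P)

/-- The restriction functor along the inclusion `ι : Q ↪ P` of a full subposet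
(precomposition with `ι`). -/
noncomputable def resFunctor : (P ⥤ ModuleCat.{0} k) ⥤ (↥Q ⥤ ModuleCat.{0} k) :=
  (CategoryTheory.Functor.whiskeringLeft _ _ _).obj (Subtype.mono_coe (· ∈ Q)).functor

variable (L R : (↥Q ⥤ ModuleCat.{0} k) ⥤ (P ⥤ ModuleCat.{0} k))
variable (adjL : L ⊣ resFunctor k Q) (adjR : resFunctor k Q ⊣ R)

/-- The canonical morphism `θ_M : Lan(M) ⟶ Ran(M)` corresponding to the identity of `M`
under the adjunction isomorphisms
`Hom(Lan M, Ran M) ≅ Hom(M, Res (Ran M)) ≅ Hom(M, M)`. -/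
noncomputable def thetaHom [IsIso adjR.counit] (M : ↥Q ⥤ ModuleCat.{0} k) :
    L.obj M ⟶ R.obj M :=
  (adjL.homEquiv M (R.obj M)).symm ((asIso adjR.counit).inv.app M)

lemma thetaHom_naturality [IsIso adjR.counit] {M N : ↥Q ⥤ ModuleCat.{0} k} (f : M ⟶ N) :
    L.map f ≫ thetaHom k Q L R adjL adjR N = thetaHom k Q L R adjL adjR M ≫ R.map f := by
  dsimp [thetaHom]
  rw [← Adjunction.homEquiv_naturality_left_symm, ← Adjunction.homEquiv_naturality_right_symm]
  congr 1
  simpa using ((asIso adjR.counit).inv.naturality f)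

/-- The functor `Θ`, sending `M` to the image of `θ_M : Lan(M) ⟶ Ran(M)`. -/
noncomputable def Theta [IsIso adjR.counit] :
    (↥Q ⥤ ModuleCat.{0} k) ⥤ (P ⥤ ModuleCat.{0} k) where
  obj M := image (thetaHom k Q L R adjL adjR M)
  map {M N} f := image.map (Arrow.homMk' _ _ (thetaHom_naturality k Q L R adjL adjR f))
  map_id M := by
    have h : Arrow.homMk' _ _ (thetaHom_naturality k Q L R adjL adjR (𝟙 M)) =
        𝟙 (Arrow.mk (thetaHom k Q L R adjL adjR M)) :=
      Arrow.hom_ext _ _ (by simp) (by simp)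
    show image.map (Arrow.homMk' _ _ (thetaHom_naturality k Q L R adjL adjR (𝟙 M))) =
      𝟙 (image (thetaHom k Q L R adjL adjR M))
    rw [h, image.map_id]
    rfl
  map_comp {M N O} f g := by
    have h : Arrow.homMk' _ _ (thetaHom_naturality k Q L R adjL adjR (f ≫ g)) =
        Arrow.homMk' _ _ (thetaHom_naturality k Q L R adjL adjR f) ≫
          Arrow.homMk' _ _ (thetaHom_naturality k Q L R adjL adjR g) :=
      Arrow.hom_ext _ _ (by simp) (by simp)
    show image.map (Arrow.homMk' _ _ (thetaHom_naturality k Q L R adjL adjR (f ≫ g))) =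
      image.map (Arrow.homMk' _ _ (thetaHom_naturality k Q L R adjL adjR f)) ≫
        image.map (Arrow.homMk' _ _ (thetaHom_naturality k Q L R adjL adjR g))
    rw [h, image.map_comp]

end KanTheta

section AuxLemmas

open CategoryTheory CategoryTheory.Limits

/-- If `p ≫ i` is an isomorphism with `p` epi and `i` mono, then both are isomorphisms. -/
lemma isIso_pair_of_comp_isIso {C : Type*} [Category C] {A B D : C}
    (p : A ⟶ B) (i : B ⟶ D) [Epi p] [Mono i] (h : IsIso (p ≫ i)) : IsIso p ∧ IsIso i := by
  haveI : IsSplitMono p := IsSplitMono.mk'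
    ⟨i ≫ inv (p ≫ i), by rw [← Category.assoc, IsIso.hom_inv_id]⟩
  haveI hp : IsIso p := isIso_of_epi_of_isSplitMono p
  refine ⟨hp, ?_⟩
  have hi : i = inv p ≫ (p ≫ i) := by simp
  rw [hi]
  infer_instance

/-- In a brick (endomorphism ring a field), the identity is nonzero. -/
lemma brick_id_ne_zero {C : Type*} [Category C] [Preadditive C] {k : Type} [Field k]
    {M : C} (e : CategoryTheory.End M ≃+* k) (h : (𝟙 M : CategoryTheory.End M) = 0) : False := by
  have h1 : (1 : CategoryTheory.End M) = 0 := by rw [CategoryTheory.End.one_def]; exact h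
  have : (1 : k) = 0 := by rw [← map_one e, h1, map_zero e]
  exact one_ne_zero this

/-- In a brick, every nonzero endomorphism is an isomorphism. -/
lemma brick_isIso {C : Type*} [Category C] [Preadditive C] {k : Type} [Field k]
    {M : C} (e : CategoryTheory.End M ≃+* k) {c : CategoryTheory.End M}
    (hc : c ≠ 0) : IsIso (show M ⟶ M from c) := by
  have h1 : e c ≠ 0 := by
    intro h
    exact hc (by simpa using e.injective (by simpa using h))
  set d : CategoryTheory.End M := e.symm (e c)⁻¹ with hd
  have h2 : c * d = 1 := by
    have he : e (c * d) = 1 := by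
      rw [map_mul, hd, RingEquiv.apply_symm_apply, mul_inv_cancel₀ h1]
    calc c * d = e.symm (e (c * d)) := (e.symm_apply_apply _).symm
      _ = e.symm 1 := by rw [he]
      _ = 1 := map_one e.symm
  have h3 : d * c = 1 := by
    have he : e (d * c) = 1 := by
      rw [map_mul, hd, RingEquiv.apply_symm_apply, inv_mul_cancel₀ h1]
    calc d * c = e.symm (e (d * c)) := (e.symm_apply_apply _).symm
      _ = e.symm 1 := by rw [he]
      _ = 1 := map_one e.symm
  refine ⟨⟨d, ?_, ?_⟩⟩
  · rw [← CategoryTheory.End.mul_def, h3, CategoryTheory.End.one_def]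
  · rw [← CategoryTheory.End.mul_def, h2, CategoryTheory.End.one_def]

end AuxLemmas

section ThetaAux

open CategoryTheory CategoryTheory.Limits

variable {k : Type} [Field k] {P : Type} [PartialOrder P] {Q : Set P}
variable {L R : (↥Q ⥤ ModuleCat.{0} k) ⥤ (P ⥤ ModuleCat.{0} k)}
variable (adjL : L ⊣ resFunctor k Q) (adjR : resFunctor k Q ⊣ R)
variable [IsIso adjR.counit] (M : ↥Q ⥤ ModuleCat.{0} k)

lemma theta_adjunct :
    adjL.homEquiv M (R.obj M) (thetaHom k Q L R adjL adjR M) = (asIso adjR.counit).inv.app M :=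
  (adjL.homEquiv _ _).apply_symm_apply _

lemma eq_Lmap_theta (f : L.obj M ⟶ R.obj M) :
    f = L.map (adjL.homEquiv M (R.obj M) f ≫ adjR.counit.app M) ≫
      thetaHom k Q L R adjL adjR M := by
  have hic : adjR.counit.app M ≫ (asIso adjR.counit).inv.app M = 𝟙 _ := by
    simpa using Iso.hom_inv_id_app (asIso adjR.counit) M
  have h : (adjL.homEquiv M (R.obj M) f ≫ adjR.counit.app M) ≫
      (asIso adjR.counit).inv.app M = adjL.homEquiv M (R.obj M) f := by
    rw [Category.assoc, hic]
    simp
  calc f = (adjL.homEquiv M (R.obj M)).symm (adjL.homEquiv M (R.obj M) f) :=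
        (Equiv.symm_apply_apply _ _).symm
    _ = (adjL.homEquiv M (R.obj M)).symm ((adjL.homEquiv M (R.obj M) f ≫ adjR.counit.app M)
          ≫ (asIso adjR.counit).inv.app M) := by rw [h]
    _ = L.map (adjL.homEquiv M (R.obj M) f ≫ adjR.counit.app M) ≫
          thetaHom k Q L R adjL adjR M := by
        rw [Adjunction.homEquiv_naturality_left_symm]
        rfl

lemma isIso_resMap_theta [IsIso adjL.unit] :
    IsIso ((resFunctor k Q).map (thetaHom k Q L R adjL adjR M)) := by
  have h2 := theta_adjunct adjL adjR M
  rw [Adjunction.homEquiv_unit] at h2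
  have h5 : (resFunctor k Q).map (thetaHom k Q L R adjL adjR M)
      = inv (adjL.unit.app M) ≫ (asIso adjR.counit).inv.app M := by
    rw [← h2]
    simp
  rw [h5]
  infer_instance

end ThetaAux

/-- Characterization of `Θ(M)` for a brick `M` over the full subposet `Q`:
a persistence module `X` over `P` is isomorphic to `Θ(M)` iff (i) `Res(X) ≅ M`, (ii) no
proper subobject of `X` restricts to `M`, and (iii) no proper quotient of `X` restricts
to `M`. -/
theorem Theta_characterization
    (k : Type) [Field k] (P : Type) [PartialOrder P] [Finite P] (Q : Set P)
    (L R : (↥Q ⥤ ModuleCat.{0} k) ⥤ (P ⥤ ModuleCat.{0} k))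
    (adjL : L ⊣ resFunctor k Q) (adjR : resFunctor k Q ⊣ R)
    [IsIso adjL.unit] [IsIso adjR.counit]
    (M : ↥Q ⥤ ModuleCat.{0} k) (hfd : PointwiseFinite k M)
    (hbrick : Nonempty (CategoryTheory.End M ≃+* k))
    (X : P ⥤ ModuleCat.{0} k) :
    Nonempty (X ≅ (Theta k Q L R adjL adjR).obj M) ↔
      (Nonempty ((resFunctor k Q).obj X ≅ M) ∧
       (∀ (Y : P ⥤ ModuleCat.{0} k) (m : Y ⟶ X), Mono m → ¬ IsIso m →
         ¬ Nonempty ((resFunctor k Q).obj Y ≅ M)) ∧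
       (∀ (Z : P ⥤ ModuleCat.{0} k) (e : X ⟶ Z), Epi e → ¬ IsIso e →
         ¬ Nonempty ((resFunctor k Q).obj Z ≅ M))) := by
  obtain ⟨eb⟩ := hbrick
  haveI : (resFunctor k Q).IsLeftAdjoint := adjR.isLeftAdjoint
  haveI : (resFunctor k Q).IsRightAdjoint := adjL.isRightAdjoint
  set θ : L.obj M ⟶ R.obj M := thetaHom k Q L R adjL adjR M with hθdef
  haveI hResθ : IsIso ((resFunctor k Q).map θ) := by
    rw [hθdef]; exact isIso_resMap_theta adjL adjR M
  have hfac : factorThruImage θ ≫ image.ι θ = θ := image.fac θ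
  have hpair : IsIso ((resFunctor k Q).map (factorThruImage θ)) ∧
      IsIso ((resFunctor k Q).map (image.ι θ)) := by
    apply isIso_pair_of_comp_isIso
    rw [← Functor.map_comp, hfac]
    exact hResθ
  haveI hIπ := hpair.1
  haveI hIι := hpair.2
  have resImIso : (resFunctor k Q).obj (image θ) ≅ M :=
    asIso ((resFunctor k Q).map (image.ι θ)) ≪≫ asIso (adjR.counit.app M)
  constructor
  · rintro ⟨hX0⟩
    have hX' : X ≅ image θ := hX0
    refine ⟨⟨(resFunctor k Q).mapIso hX' ≪≫ resImIso⟩, ?_, ?_⟩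
    · -- no proper subobject restricts to M
      rintro Y m hm hmn ⟨ψ⟩
      haveI := hm
      set g : L.obj M ⟶ Y := (adjL.homEquiv M Y).symm ψ.inv with hgdef
      set f : L.obj M ⟶ R.obj M := g ≫ m ≫ hX'.hom ≫ image.ι θ with hfdef
      set c : M ⟶ M := adjL.homEquiv M (R.obj M) f ≫ adjR.counit.app M with hcdef
      have hhe : adjL.homEquiv M (R.obj M) f
          = ψ.inv ≫ (resFunctor k Q).map (m ≫ hX'.hom ≫ image.ι θ) := by
        rw [hfdef, Adjunction.homEquiv_naturality_right, hgdef, Equiv.apply_symm_apply]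
      haveI hMc : Mono c := by
        rw [hcdef, hhe]
        simp only [Functor.map_comp, Category.assoc]
        infer_instance
      have hcne : c ≠ 0 := by
        intro h0
        apply brick_id_ne_zero eb
        have h1 : 𝟙 M ≫ c = 0 ≫ c := by rw [h0]; simp
        exact (cancel_mono c).mp h1
      have hciso : IsIso c := brick_isIso eb hcne
      haveI := hciso
      have key : f = L.map c ≫ θ := by
        rw [hcdef, hθdef]; exact eq_Lmap_theta adjL adjR M f
      have key3 : g ≫ m ≫ hX'.hom = L.map c ≫ factorThruImage θ := by
        rw [← cancel_mono (image.ι θ)]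
        simp only [Category.assoc]
        rw [hfac, ← hfdef]
        exact key
      haveI hepi1 : Epi (g ≫ m ≫ hX'.hom) := by rw [key3]; infer_instance
      haveI : Epi (m ≫ hX'.hom) := epi_of_epi g (m ≫ hX'.hom)
      haveI hepim : Epi m := by
        have hm2 : m = (m ≫ hX'.hom) ≫ hX'.inv := by simp
        rw [hm2]
        exact epi_comp _ _
      exact hmn (isIso_of_mono_of_epi m)
    · -- no proper quotient restricts to M
      rintro Z q hq hqn ⟨ψ⟩
      haveI := hq
      set g' : Z ⟶ R.obj M := adjR.homEquiv Z M ψ.hom with hg'def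
      set u : L.obj M ⟶ Z := factorThruImage θ ≫ hX'.inv ≫ q with hudef
      set f : L.obj M ⟶ R.obj M := u ≫ g' with hfdef
      set c : M ⟶ M := adjL.homEquiv M (R.obj M) f ≫ adjR.counit.app M with hcdef
      have hg'c : (resFunctor k Q).map g' ≫ adjR.counit.app M = ψ.hom := by
        have h := (adjR.homEquiv Z M).symm_apply_apply ψ.hom
        rwa [← hg'def, Adjunction.homEquiv_counit] at h
      have hhe : adjL.homEquiv M (R.obj M) f
          = adjL.homEquiv M Z u ≫ (resFunctor k Q).map g' := by
        rw [hfdef, Adjunction.homEquiv_naturality_right]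
      have hueq : adjL.homEquiv M Z u = adjL.unit.app M ≫ (resFunctor k Q).map u := by
        rw [Adjunction.homEquiv_unit]
      have hceq : c = adjL.homEquiv M Z u ≫ ψ.hom := by
        rw [hcdef, hhe, Category.assoc]
        exact whisker_eq _ hg'c
      haveI hEc : Epi c := by
        rw [hceq, hueq, hudef]
        simp only [Functor.map_comp, Category.assoc]
        infer_instance
      have hcne : c ≠ 0 := by
        intro h0
        apply brick_id_ne_zero eb
        have h1 : c ≫ 𝟙 M = c ≫ 0 := by rw [h0]; simp
        exact (cancel_epi c).mp h1
      have hciso : IsIso c := brick_isIso eb hcne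
      haveI := hciso
      have key : f = L.map c ≫ θ := by
        rw [hcdef, hθdef]; exact eq_Lmap_theta adjL adjR M f
      have nat : L.map c ≫ θ = θ ≫ R.map c := by
        rw [hθdef]; exact thetaHom_naturality k Q L R adjL adjR c
      have key4 : hX'.inv ≫ q ≫ g' = image.ι θ ≫ R.map c := by
        rw [← cancel_epi (factorThruImage θ)]
        have hpre : factorThruImage θ ≫ hX'.inv ≫ q ≫ g' = f := by
          rw [hfdef, hudef]; simp only [Category.assoc]
        rw [hpre, key, nat, ← Category.assoc, hfac]
      haveI hmono1 : Mono (hX'.inv ≫ q ≫ g') := by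
        rw [key4]; infer_instance
      haveI hmono2 : Mono (q ≫ g') := by
        have hq2 : q ≫ g' = hX'.hom ≫ hX'.inv ≫ q ≫ g' := by simp
        rw [hq2]
        exact mono_comp _ _
      haveI hmq : Mono q := mono_of_mono q g'
      exact hqn (isIso_of_mono_of_epi q)
  · rintro ⟨⟨φ⟩, hsub, hquot⟩
    set α : L.obj M ⟶ X := (adjL.homEquiv M X).symm φ.inv with hαdef
    set β : X ⟶ R.obj M := adjR.homEquiv X M φ.hom with hβdef
    have hβc : (resFunctor k Q).map β ≫ adjR.counit.app M = φ.hom := by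
      have h := (adjR.homEquiv X M).symm_apply_apply φ.hom
      rwa [← hβdef, Adjunction.homEquiv_counit] at h
    have hαu : adjL.unit.app M ≫ (resFunctor k Q).map α = φ.inv := by
      have h := (adjL.homEquiv M X).apply_symm_apply φ.inv
      rwa [← hαdef, Adjunction.homEquiv_unit] at h
    have hαβ : α ≫ β = θ := by
      apply (adjL.homEquiv M (R.obj M)).injective
      rw [Adjunction.homEquiv_naturality_right, hαdef, Equiv.apply_symm_apply, hθdef,
        theta_adjunct adjL adjR M]
      have e2 : (φ.inv ≫ (resFunctor k Q).map β) ≫ adjR.counit.app M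
          = (asIso adjR.counit).inv.app M ≫ adjR.counit.app M := by
        rw [Category.assoc, hβc, Iso.inv_hom_id]
        simpa using (Iso.inv_hom_id_app (asIso adjR.counit) M).symm
      exact (cancel_mono (adjR.counit.app M)).mp e2
    have hResα : IsIso ((resFunctor k Q).map α) := by
      have h5 : (resFunctor k Q).map α = inv (adjL.unit.app M) ≫ φ.inv := by
        rw [← hαu]; simp
      rw [h5]; infer_instance
    have hResβ : IsIso ((resFunctor k Q).map β) := by
      haveI h6 : IsIso ((resFunctor k Q).map β ≫ adjR.counit.app M) := by
        rw [hβc]; infer_instance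
      exact IsIso.of_isIso_comp_right _ (adjR.counit.app M)
    have hpairα : IsIso ((resFunctor k Q).map (factorThruImage α)) ∧
        IsIso ((resFunctor k Q).map (image.ι α)) := by
      apply isIso_pair_of_comp_isIso
      rw [← Functor.map_comp, image.fac]
      exact hResα
    have hιiso : IsIso (image.ι α) := by
      by_contra hno
      refine hsub (image α) (image.ι α) inferInstance hno ⟨?_⟩
      haveI := hpairα.2
      exact asIso ((resFunctor k Q).map (image.ι α)) ≪≫ φ
    haveI := hιiso
    haveI hαepi : Epi α := by
      rw [← image.fac α]; exact epi_comp _ _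
    have hpairβ : IsIso ((resFunctor k Q).map (factorThruImage β)) ∧
        IsIso ((resFunctor k Q).map (image.ι β)) := by
      apply isIso_pair_of_comp_isIso
      rw [← Functor.map_comp, image.fac]
      exact hResβ
    have hpiso : IsIso (factorThruImage β) := by
      by_contra hno
      refine hquot (image β) (factorThruImage β) inferInstance hno ⟨?_⟩
      haveI := hpairβ.1
      exact (asIso ((resFunctor k Q).map (factorThruImage β))).symm ≪≫ φ
    haveI := hpiso
    haveI hβmono : Mono β := by
      rw [← image.fac β]; exact mono_comp _ _
    haveI : StrongEpi α := by haveI := normalEpiOfEpi α; infer_instance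
    exact ⟨image.isoStrongEpiMono α β hαβ⟩
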